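/- The function B(z) = 2(√(z²+4) − z)/(√(z²+8) − 3z) is strictly monotone increasing on (−∞, −38). -/

import Mathlib

lemma eb_hasDerivAt (z : ℝ) (hz : z < 0) :
    HasDerivAt (fun z : ℝ => 2 * (Real.sqrt (z ^ 2 + 4) - z) / (Real.sqrt (z ^ 2 + 8) - 3 * z))
      ((2 * ((2 * z) / (2 * Real.sqrt (z ^ 2 + 4)) - 1) * (Real.sqrt (z ^ 2 + 8) - 3 * z)
        - 2 * (Real.sqrt (z ^ 2 + 4) - z) * ((2 * z) / (2 * Real.sqrt (z ^ 2 + 8)) - 3))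
        / (Real.sqrt (z ^ 2 + 8) - 3 * z) ^ 2) z := by
  have h4 : (0:ℝ) < z ^ 2 + 4 := by positivity
  have h8 : (0:ℝ) < z ^ 2 + 8 := by positivity
  have hsq : HasDerivAt (fun z : ℝ => z ^ 2 + 4) (2 * z) z := by
    simpa using (hasDerivAt_pow 2 z).add_const 4
  have hsq8 : HasDerivAt (fun z : ℝ => z ^ 2 + 8) (2 * z) z := by
    simpa using (hasDerivAt_pow 2 z).add_const 8
  have hs : HasDerivAt (fun z : ℝ => Real.sqrt (z ^ 2 + 4))
      ((2 * z) / (2 * Real.sqrt (z ^ 2 + 4))) z := hsq.sqrt (by positivity)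
  have ht : HasDerivAt (fun z : ℝ => Real.sqrt (z ^ 2 + 8))
      ((2 * z) / (2 * Real.sqrt (z ^ 2 + 8))) z := hsq8.sqrt (by positivity)
  have hden : Real.sqrt (z ^ 2 + 8) - 3 * z ≠ 0 := by
    have := Real.sqrt_nonneg (z ^ 2 + 8); nlinarith
  have hnum : HasDerivAt (fun z : ℝ => 2 * (Real.sqrt (z ^ 2 + 4) - z))
      (2 * ((2 * z) / (2 * Real.sqrt (z ^ 2 + 4)) - 1)) z :=
    (hs.sub (hasDerivAt_id z)).const_mul 2
  have hd : HasDerivAt (fun z : ℝ => Real.sqrt (z ^ 2 + 8) - 3 * z)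
      ((2 * z) / (2 * Real.sqrt (z ^ 2 + 8)) - 3) z := by
    simpa using ht.fun_sub ((hasDerivAt_id z).const_mul 3)
  simpa [mul_comm, mul_assoc, mul_left_comm] using hnum.fun_div hd hden

theorem error_bound_strict_mono :
    StrictMonoOn
      (fun z : ℝ => 2 * (Real.sqrt (z ^ 2 + 4) - z) / (Real.sqrt (z ^ 2 + 8) - 3 * z))
      (Set.Iio (-38 : ℝ)) := by
  apply strictMonoOn_of_deriv_pos (convex_Iio _)
  · intro x hx
    exact (eb_hasDerivAt x (by simp only [Set.mem_Iio] at hx; linarith)).continuousAt.continuousWithinAt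
  · intro z hz
    rw [interior_Iio, Set.mem_Iio] at hz
    have hz0 : z < 0 := by linarith
    rw [(eb_hasDerivAt z hz0).deriv]
    set s := Real.sqrt (z ^ 2 + 4) with hs_def
    set t := Real.sqrt (z ^ 2 + 8) with ht_def
    have hs0 : 0 < s := Real.sqrt_pos.mpr (by positivity)
    have ht0 : 0 < t := Real.sqrt_pos.mpr (by positivity)
    have hs2 : s ^ 2 = z ^ 2 + 4 := Real.sq_sqrt (by positivity)
    have ht2 : t ^ 2 = z ^ 2 + 8 := Real.sq_sqrt (by positivity)
    have hden : 0 < t - 3 * z := by nlinarith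
    -- key inequality: -s*z < z^2 + 14
    have h1 : -(s * z) < z ^ 2 + 14 := by nlinarith [sq_nonneg (s + z), sq_nonneg (s - z)]
    -- hence 2s - z < 3t
    have h2 : 2 * s - z < 3 * t := by nlinarith
    -- hence key factor is negative
    have h3 : t ^ 2 + s * z - 3 * t * (z + s) < 0 := by
      have hid : (t ^ 2 + s * z - 3 * t * (z + s)) * (s - z) = 8 * s - 4 * z - 12 * t := by
        linear_combination (s - z) * ht2 + z * hs2 - 3 * t * hs2
      nlinarith [hid]
    have hzs : z - s < 0 := by nlinarith
    apply div_pos _ (pow_pos hden 2)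
    have key : 2 * ((2 * z) / (2 * s) - 1) * (t - 3 * z) - 2 * (s - z) * ((2 * z) / (2 * t) - 3)
        = 2 * ((z - s) * (t ^ 2 + s * z - 3 * t * (z + s))) / (s * t) := by
      field_simp
      ring
    rw [key]
    apply div_pos _ (mul_pos hs0 ht0)
    nlinarith [mul_pos_of_neg_of_neg hzs h3]
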